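/- Let g = g_{5,3,6(λ)} and let F = (α, β, γ, δ, σ) ∈ g*. Then: (1) if γ = δ = σ = 0 then Ω_F = {F}; (2) if γ = δ = 0, σ ≠ 0 then Ω_F = {(α, y, 0, 0, s) : y ∈ ℝ, σs > 0}; (3) if γ = 0, δ ≠ 0, σ = 0 then Ω_F = {(α, y, 0, t, 0) : y ∈ ℝ, δt > 0}; (4) if γ = 0, δ ≠ 0, σ ≠ 0 then Ω_F = {(α, y, 0, t, s) : y ∈ ℝ, δt > 0, s = σ(t/δ)^{λ}}; (5) if γ ≠ 0, δ = σ = 0 then Ω_F = {(x, y, z, t, 0) : y ∈ ℝ, γz > 0, x = α + γ − z, t = z·ln(z/γ)}; (6) if γ ≠ 0, δ = 0, σ ≠ 0 then Ω_F = {(x, y, z, t, s) : y ∈ ℝ, γz > 0 (equivalently σs > 0), x = α + γ − z, t = z·ln(z/γ), s = σ(z/γ)^{λ}}; (7) if γ ≠ 0, δ ≠ 0, σ = 0 then Ω_F = {(x, y, z, t, 0) : y ∈ ℝ, γz > 0, x = α + γ − z, t = z·ln(z/γ) + δ·z/γ}; (8) if γ ≠ 0, δ ≠ 0, σ ≠ 0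 then Ω_F = {(x, y, z, t, s) : y ∈ ℝ, γz > 0, x = α + γ − z, t = z·ln(z/γ) + δ·z/γ, s = σ(z/γ)^{λ}}. -/

import Mathlib

/-- The Lie bracket of g_{5,3,6(λ)}: [X1,X2] = X3, [X2,X3] = X3, [X2,X4] = X3 + X4, [X2,X5] = λ·X5,
written in coordinates with respect to the basis (X₁, X₂, X₃, X₄, X₅) (all other
brackets of basis vectors vanish); it is the bilinear extension of the structure
constants above. -/
def bracketg536 (l : ℝ) (U V : Fin 5 → ℝ) : Fin 5 → ℝ :=
  ![0, 0,
    (U 0 * V 1 - U 1 * V 0) + (U 1 * V 2 - U 2 * V 1) + (U 1 * V 3 - U 3 * V 1),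
    U 1 * V 3 - U 3 * V 1,
    l * (U 1 * V 4 - U 4 * V 1)]

/-- The matrix of the adjoint endomorphism ad_U = [U, ·] in the basis (X₁, ..., X₅):
column j holds the coordinates of [U, Xⱼ]. -/
def adg536 (l : ℝ) (U : Fin 5 → ℝ) : Matrix (Fin 5) (Fin 5) ℝ :=
  Matrix.of fun i j => bracketg536 l U (Pi.single j 1) i

/-- The orbit Ω_F = { F ∘ exp(ad_U) : U ∈ g } in coordinates with respect to the dual
basis: a functional F' is identified with the vector (F'(X₁), ..., F'(X₅)), so that
F ∘ exp(ad_U) corresponds to the row-vector–matrix product vecMul F (exp (ad_U)). -/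
noncomputable def orbitg536 (l : ℝ) (F : Fin 5 → ℝ) : Set (Fin 5 → ℝ) :=
  Set.range fun U : Fin 5 → ℝ => Matrix.vecMul F (NormedSpace.exp (adg536 l U))

open scoped Nat



lemma hasSum_exp (b : ℝ) : HasSum (fun n : ℕ => b ^ n / (n ! : ℝ)) (Real.exp b) := by
  have h := NormedSpace.exp_series_hasSum_exp' (𝕂 := ℝ) b
  rw [Real.exp_eq_exp_ℝ]
  simpa [smul_eq_mul, div_eq_inv_mul] using h

lemma hasSum_exp_shift (b : ℝ) :
    HasSum (fun n : ℕ => b ^ (n + 1) / ((n + 1)! : ℝ)) (Real.exp b - 1) := by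
  exact (hasSum_nat_add_iff (f := fun n : ℕ => b ^ n / (n ! : ℝ)) 1).mpr
    (by simpa using hasSum_exp b)

noncomputable def phig (b : ℝ) : ℝ := ∑' n : ℕ, b ^ n / ((n + 1)! : ℝ)
noncomputable def psig (l b : ℝ) : ℝ := ∑' n : ℕ, l ^ (n + 1) * b ^ n / ((n + 1)! : ℝ)

lemma summable_phig (b : ℝ) : Summable (fun n : ℕ => b ^ n / ((n + 1)! : ℝ)) := by
  apply Summable.of_norm_bounded (Real.summable_pow_div_factorial |b|)
  intro n
  rw [Real.norm_eq_abs, abs_div, abs_pow, abs_of_nonneg (by positivity : (0:ℝ) ≤ ((n+1)! : ℝ))]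
  apply div_le_div_of_nonneg_left (by positivity) (by positivity)
  exact_mod_cast Nat.factorial_le (Nat.le_succ n)

lemma summable_psig (l b : ℝ) : Summable (fun n : ℕ => l ^ (n + 1) * b ^ n / ((n + 1)! : ℝ)) := by
  apply Summable.of_norm_bounded ((Real.summable_pow_div_factorial (|l| * |b|)).mul_left |l|)
  intro n
  rw [Real.norm_eq_abs, abs_div, abs_mul, abs_pow, abs_pow,
    abs_of_nonneg (by positivity : (0:ℝ) ≤ ((n+1)! : ℝ))]
  rw [pow_succ]
  calc |l| ^ n * |l| * |b| ^ n / ((n+1)! : ℝ) = |l| * ((|l| * |b|) ^ n / ((n+1)! : ℝ)) := by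
        rw [mul_pow]; ring
    _ ≤ |l| * ((|l| * |b|) ^ n / (n ! : ℝ)) := by
        apply mul_le_mul_of_nonneg_left _ (abs_nonneg l)
        apply div_le_div_of_nonneg_left (by positivity) (by positivity)
        exact_mod_cast Nat.factorial_le (Nat.le_succ n)

lemma hasSum_phig (b : ℝ) : HasSum (fun n : ℕ => b ^ n / ((n + 1)! : ℝ)) (phig b) :=
  (summable_phig b).hasSum

lemma hasSum_psig (l b : ℝ) :
    HasSum (fun n : ℕ => l ^ (n + 1) * b ^ n / ((n + 1)! : ℝ)) (psig l b) :=
  (summable_psig l b).hasSum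

lemma mul_phig (b : ℝ) : b * phig b = Real.exp b - 1 := by
  have h2 := (hasSum_phig b).mul_left b
  have he : (fun n : ℕ => b * (b ^ n / ((n + 1)! : ℝ)))
      = fun n : ℕ => b ^ (n + 1) / ((n + 1)! : ℝ) := by
    funext n; rw [pow_succ]; ring
  rw [he] at h2
  exact h2.unique (hasSum_exp_shift b)

lemma hasSum_expl_shift (l b : ℝ) :
    HasSum (fun n : ℕ => (l * b) ^ (n + 1) / ((n + 1)! : ℝ)) (Real.exp (l * b) - 1) :=
  hasSum_exp_shift (l * b)

lemma mul_psig (l b : ℝ) : b * psig l b = Real.exp (l * b) - 1 := by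
  have h2 := (hasSum_psig l b).mul_left b
  have he : (fun n : ℕ => b * (l ^ (n + 1) * b ^ n / ((n + 1)! : ℝ)))
      = fun n : ℕ => (l * b) ^ (n + 1) / ((n + 1)! : ℝ) := by
    funext n; rw [mul_pow, pow_succ, pow_succ]; ring
  rw [he] at h2
  exact h2.unique (hasSum_expl_shift l b)

lemma phig_zero : phig 0 = 1 := by
  rw [phig, tsum_eq_single 0 (by intro n hn; simp [zero_pow hn])]
  norm_num

lemma psig_zero (l : ℝ) : psig l 0 = l := by
  rw [psig, tsum_eq_single 0 (by intro n hn; simp [zero_pow hn])]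
  norm_num

lemma phig_pos (b : ℝ) : 0 < phig b := by
  rcases lt_trichotomy b 0 with hb | hb | hb
  · have h := mul_phig b
    have h1 : Real.exp b - 1 < 0 := by
      have := Real.exp_lt_one_iff.mpr hb; linarith
    nlinarith
  · rw [hb, phig_zero]; norm_num
  · have h := mul_phig b
    have h1 : 0 < Real.exp b - 1 := by
      have : (1:ℝ) < Real.exp b := Real.one_lt_exp_iff.mpr hb
      linarith
    nlinarith

lemma psig_ne_zero (l b : ℝ) (hl : l ≠ 0) : psig l b ≠ 0 := by
  rcases eq_or_ne b 0 with hb | hb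
  · rw [hb, psig_zero]; exact hl
  · intro h0
    have h := mul_psig l b
    rw [h0, mul_zero] at h
    have : Real.exp (l * b) = 1 := by linarith
    rw [Real.exp_eq_one_iff] at this
    exact (mul_ne_zero hl hb) this

lemma adg536_eq (l : ℝ) (U : Fin 5 → ℝ) :
    adg536 l U = !![0,0,0,0,0; 0,0,0,0,0;
      -U 1, U 0 - U 2 - U 3, U 1, U 1, 0;
      0, -U 3, 0, U 1, 0;
      0, -(l * U 4), 0, 0, l * U 1] := by
  ext i j
  fin_cases i <;> fin_cases j <;>
    simp [adg536, bracketg536, Pi.single_apply, Matrix.vecHead, Matrix.vecTail] <;> ring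

noncomputable def adpow (l : ℝ) (U : Fin 5 → ℝ) (n : ℕ) : Matrix (Fin 5) (Fin 5) ℝ :=
  !![0,0,0,0,0; 0,0,0,0,0;
     -U 1 ^ (n+1), U 1 ^ n * (U 0 - U 2) - ((n:ℝ)+1) * U 1 ^ n * U 3, U 1 ^ (n+1), ((n:ℝ)+1) * U 1 ^ (n+1), 0;
     0, -(U 1 ^ n * U 3), 0, U 1 ^ (n+1), 0;
     0, -(l ^ (n+1) * U 1 ^ n * U 4), 0, 0, l ^ (n+1) * U 1 ^ (n+1)]

lemma adg536_pow (l : ℝ) (U : Fin 5 → ℝ) (n : ℕ) :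
    (adg536 l U) ^ (n + 1) = adpow l U n := by
  induction n with
  | zero =>
    rw [pow_one, adg536_eq]
    ext i j
    fin_cases i <;> fin_cases j <;> simp [adpow] <;> ring
  | succ n ih =>
    rw [pow_succ', ih, adg536_eq]
    ext i j
    fin_cases i <;> fin_cases j <;>
      simp [adpow, Matrix.mul_apply, Fin.sum_univ_five, Matrix.vecHead, Matrix.vecTail] <;> push_cast <;> ring
lemma hasSum_nexp (b : ℝ) :
    HasSum (fun n : ℕ => ((n:ℝ)+1) * b ^ (n+1) / ((n+1)! : ℝ)) (b * Real.exp b) := by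
  have h := (hasSum_exp b).mul_left b
  have he : (fun n : ℕ => b * (b ^ n / (n ! : ℝ)))
      = fun n : ℕ => ((n:ℝ)+1) * b ^ (n+1) / ((n+1)! : ℝ) := by
    funext n
    have hfac : ((n+1)! : ℝ) = ((n:ℝ)+1) * (n ! : ℝ) := by
      rw [Nat.factorial_succ]; push_cast; ring
    have hne : ((n:ℝ)+1) ≠ 0 := by positivity
    have hne2 : (n ! : ℝ) ≠ 0 := by positivity
    rw [hfac, pow_succ]
    field_simp
  rwa [he] at h

lemma hasSum_nexp' (b : ℝ) :
    HasSum (fun n : ℕ => ((n:ℝ)+1) * b ^ n / ((n+1)! : ℝ)) (Real.exp b) := by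
  have h := hasSum_exp b
  have he : (fun n : ℕ => b ^ n / (n ! : ℝ))
      = fun n : ℕ => ((n:ℝ)+1) * b ^ n / ((n+1)! : ℝ) := by
    funext n
    have hfac : ((n+1)! : ℝ) = ((n:ℝ)+1) * (n ! : ℝ) := by
      rw [Nat.factorial_succ]; push_cast; ring
    have hne : ((n:ℝ)+1) ≠ 0 := by positivity
    have hne2 : (n ! : ℝ) ≠ 0 := by positivity
    rw [hfac]
    field_simp
  rwa [he] at h

noncomputable def expAd (l : ℝ) (U : Fin 5 → ℝ) : Matrix (Fin 5) (Fin 5) ℝ :=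
  !![1,0,0,0,0; 0,1,0,0,0;
     1 - Real.exp (U 1), (U 0 - U 2) * phig (U 1) - U 3 * Real.exp (U 1), Real.exp (U 1), U 1 * Real.exp (U 1), 0;
     0, -(U 3 * phig (U 1)), 0, Real.exp (U 1), 0;
     0, -(U 4 * psig l (U 1)), 0, 0, Real.exp (l * U 1)]

lemma exp_adg536 (l : ℝ) (U : Fin 5 → ℝ) :
    NormedSpace.exp (adg536 l U) = expAd l U := by
  rw [NormedSpace.exp_eq_tsum (𝕂 := ℝ)]
  have shift : HasSum (fun n : ℕ => (((n+1)! : ℝ))⁻¹ • (adg536 l U) ^ (n+1))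
      (expAd l U - 1) := by
    have hf : (fun n : ℕ => (((n+1)! : ℝ))⁻¹ • (adg536 l U) ^ (n+1))
        = fun n : ℕ => (((n+1)! : ℝ))⁻¹ • adpow l U n := by
      funext n; rw [adg536_pow]
    rw [hf]
    refine Pi.hasSum.mpr fun i => Pi.hasSum.mpr fun j => ?_
    fin_cases i <;> fin_cases j <;>
      simp [adpow, expAd, Matrix.sub_apply, Matrix.one_apply, smul_eq_mul,
        Matrix.vecHead, Matrix.vecTail]
    all_goals first
    | exact hasSum_zero
    | (convert (hasSum_exp_shift (U 1)) using 1 <;> (try rfl) <;> (try funext n) <;> push_cast <;> ring1)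
    | (convert (hasSum_exp_shift (U 1)).neg using 1 <;> (try rfl) <;> (try funext n) <;> push_cast <;> ring1)
    | (convert (hasSum_nexp (U 1)) using 1 <;> (try rfl) <;> (try funext n) <;> push_cast <;> ring1)
    | (convert (hasSum_expl_shift l (U 1)) using 1 <;> (try rfl) <;> (try funext n) <;> push_cast <;> ring1)
    | (convert ((hasSum_phig (U 1)).mul_left (U 3)).neg using 1 <;> (try rfl) <;> (try funext n) <;> push_cast <;> ring1)
    | (convert ((hasSum_psig l (U 1)).mul_left (U 4)).neg using 1 <;> (try rfl) <;> (try funext n) <;> push_cast <;> ring1)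
    | (convert ((hasSum_phig (U 1)).mul_left (U 0 - U 2)).sub ((hasSum_nexp' (U 1)).mul_left (U 3)) using 1 <;> (try rfl) <;> (try funext n) <;> push_cast <;> ring1)
  have h0 := (hasSum_nat_add_iff (f := fun n : ℕ => ((n ! : ℝ))⁻¹ • (adg536 l U) ^ n) 1).mp shift
  simp only [Finset.sum_range_one, pow_zero, Nat.factorial_zero] at h0
  norm_num at h0
  exact h0.tsum_eq


lemma orbit_eq (l α β γ δ σ : ℝ) :
    orbitg536 l ![α, β, γ, δ, σ] = Set.range (fun U : Fin 5 → ℝ =>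
      ![α + γ * (1 - Real.exp (U 1)),
        β + γ * ((U 0 - U 2) * phig (U 1) - U 3 * Real.exp (U 1))
          - δ * (U 3 * phig (U 1)) - σ * (U 4 * psig l (U 1)),
        γ * Real.exp (U 1),
        γ * (U 1 * Real.exp (U 1)) + δ * Real.exp (U 1),
        σ * Real.exp (l * U 1)]) := by
  unfold orbitg536
  apply congrArg Set.range
  funext U
  rw [exp_adg536]
  funext j
  fin_cases j <;>
    simp [expAd, Matrix.vecMul, dotProduct, Fin.sum_univ_five,
      Matrix.vecHead, Matrix.vecTail] <;> ring

lemma aux_pos {c : ℝ} (t : ℝ) (hc : c ≠ 0) : 0 < c * (c * Real.exp t) := by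
  have h1 := Real.exp_pos t
  have h2 : 0 < c ^ 2 := lt_of_le_of_ne (sq_nonneg c) (Ne.symm (pow_ne_zero 2 hc))
  nlinarith

lemma aux_div_pos {c s : ℝ} (h : 0 < c * s) : 0 < s / c := by
  rcases mul_pos_iff.mp h with ⟨h1, h2⟩ | ⟨h1, h2⟩
  · exact div_pos h2 h1
  · exact div_pos_of_neg_of_neg h2 h1


theorem kOrbits_g536 (l α β γ δ σ : ℝ) (hl0 : l ≠ 0) (hl1 : l ≠ 1) :
    (γ = 0 → δ = 0 → σ = 0 → orbitg536 l ![α, β, γ, δ, σ] = {![α, β, γ, δ, σ]}) ∧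
    (γ = 0 → δ = 0 → σ ≠ 0 → orbitg536 l ![α, β, γ, δ, σ] = {p | ∃ y s : ℝ, σ * s > 0 ∧ p = ![α, y, 0, 0, s]}) ∧
    (γ = 0 → δ ≠ 0 → σ = 0 → orbitg536 l ![α, β, γ, δ, σ] = {p | ∃ y t : ℝ, δ * t > 0 ∧ p = ![α, y, 0, t, 0]}) ∧
    (γ = 0 → δ ≠ 0 → σ ≠ 0 → orbitg536 l ![α, β, γ, δ, σ] = {p | ∃ y t s : ℝ, δ * t > 0 ∧ s = σ * (t / δ) ^ l ∧ p = ![α, y, 0, t, s]}) ∧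
    (γ ≠ 0 → δ = 0 → σ = 0 → orbitg536 l ![α, β, γ, δ, σ] = {p | ∃ x y z t : ℝ, γ * z > 0 ∧ x = α + γ - z ∧ t = z * Real.log (z / γ) ∧ p = ![x, y, z, t, 0]}) ∧
    (γ ≠ 0 → δ = 0 → σ ≠ 0 → orbitg536 l ![α, β, γ, δ, σ] = {p | ∃ x y z t s : ℝ, γ * z > 0 ∧ x = α + γ - z ∧ t = z * Real.log (z / γ) ∧ s = σ * (z / γ) ^ l ∧ p = ![x, y, z, t, s]}) ∧
    (γ ≠ 0 → δ ≠ 0 → σ = 0 → orbitg536 l ![α, β, γ, δ, σ] = {p | ∃ x y z t : ℝ, γ * z > 0 ∧ x = α + γ - z ∧ t = z * Real.log (z / γ) + δ * z / γ ∧ p = ![x, y, z, t, 0]}) ∧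
    (γ ≠ 0 → δ ≠ 0 → σ ≠ 0 → orbitg536 l ![α, β, γ, δ, σ] = {p | ∃ x y z t s : ℝ, γ * z > 0 ∧ x = α + γ - z ∧ t = z * Real.log (z / γ) + δ * z / γ ∧ s = σ * (z / γ) ^ l ∧ p = ![x, y, z, t, s]}) := by
  refine ⟨?_, ?_, ?_, ?_, ?_, ?_, ?_, ?_⟩
  · intro hγ hδ hσ; subst hγ; subst hδ; subst hσ
    rw [orbit_eq]
    ext p
    simp only [Set.mem_range, Set.mem_singleton_iff]
    constructor
    · rintro ⟨U, rfl⟩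
      funext j; fin_cases j <;> simp
    · rintro rfl
      exact ⟨![0,0,0,0,0], by funext j; fin_cases j <;> simp⟩
  · intro hγ hδ hσ; subst hγ; subst hδ
    rw [orbit_eq]
    ext p
    simp only [Set.mem_range, Set.mem_setOf_eq]
    constructor
    · rintro ⟨U, rfl⟩
      refine ⟨β - σ * (U 4 * psig l (U 1)), σ * Real.exp (l * U 1), aux_pos _ hσ, ?_⟩
      funext j; fin_cases j <;> simp
    · rintro ⟨y, s, hs, rfl⟩
      have hsσ : 0 < s / σ := aux_div_pos hs
      have hlb : l * (Real.log (s / σ) / l) = Real.log (s / σ) := by field_simp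
      have hψ := psig_ne_zero l (Real.log (s / σ) / l) hl0
      refine ⟨![0, Real.log (s / σ) / l, 0, 0,
        (β - y) / (σ * psig l (Real.log (s / σ) / l))], ?_⟩
      funext j; fin_cases j <;>
        simp [hlb, Real.exp_log hsσ]
      · field_simp; ring
      · field_simp
  · intro hγ hδ hσ; subst hγ; subst hσ
    rw [orbit_eq]
    ext p
    simp only [Set.mem_range, Set.mem_setOf_eq]
    constructor
    · rintro ⟨U, rfl⟩
      refine ⟨β - δ * (U 3 * phig (U 1)), δ * Real.exp (U 1), aux_pos _ hδ, ?_⟩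
      funext j; fin_cases j <;> simp
    · rintro ⟨y, t, ht, rfl⟩
      have htδ : 0 < t / δ := aux_div_pos ht
      have hφ := ne_of_gt (phig_pos (Real.log (t / δ)))
      refine ⟨![0, Real.log (t / δ), 0, (β - y) / (δ * phig (Real.log (t / δ))), 0], ?_⟩
      funext j; fin_cases j <;> simp [Real.exp_log htδ]
      · field_simp; ring
      · field_simp
  · intro hγ hδ hσ; subst hγ
    rw [orbit_eq]
    ext p
    simp only [Set.mem_range, Set.mem_setOf_eq]
    constructor
    · rintro ⟨U, rfl⟩
      refine ⟨β - δ * (U 3 * phig (U 1)) - σ * (U 4 * psig l (U 1)), δ * Real.exp (U 1),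
        σ * Real.exp (l * U 1), aux_pos _ hδ, ?_, ?_⟩
      · rw [mul_div_cancel_left₀ _ hδ, ← Real.exp_mul, mul_comm l (U 1)]
      · funext j; fin_cases j <;> simp <;> ring
    · rintro ⟨y, t, s, ht, hs, rfl⟩
      have htδ : 0 < t / δ := aux_div_pos ht
      have hφ := ne_of_gt (phig_pos (Real.log (t / δ)))
      refine ⟨![0, Real.log (t / δ), 0, (β - y) / (δ * phig (Real.log (t / δ))), 0], ?_⟩
      funext j; fin_cases j <;> simp [Real.exp_log htδ]
      · field_simp; ring
      · field_simp
      · rw [hs, Real.rpow_def_of_pos htδ, mul_comm l]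
  · intro hγ hδ hσ; subst hδ; subst hσ
    rw [orbit_eq]
    ext p
    simp only [Set.mem_range, Set.mem_setOf_eq]
    constructor
    · rintro ⟨U, rfl⟩
      refine ⟨α + γ * (1 - Real.exp (U 1)),
        β + γ * ((U 0 - U 2) * phig (U 1) - U 3 * Real.exp (U 1)),
        γ * Real.exp (U 1), γ * (U 1 * Real.exp (U 1)),
        aux_pos _ hγ, by ring, ?_, ?_⟩
      · rw [mul_div_cancel_left₀ _ hγ, Real.log_exp]; ring
      · funext j; fin_cases j <;> simp <;> ring
    · rintro ⟨x, y, z, t, hz, hx, ht, rfl⟩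
      have hzγ : 0 < z / γ := aux_div_pos hz
      have hφ := ne_of_gt (phig_pos (Real.log (z / γ)))
      refine ⟨![(y - β) / (γ * phig (Real.log (z / γ))), Real.log (z / γ), 0, 0, 0], ?_⟩
      funext j; fin_cases j <;> simp [Real.exp_log hzγ]
      · rw [hx]; field_simp; ring
      · field_simp; ring
      · field_simp
      · rw [ht]; field_simp
  · intro hγ hδ hσ; subst hδ
    rw [orbit_eq]
    ext p
    simp only [Set.mem_range, Set.mem_setOf_eq]
    constructor
    · rintro ⟨U, rfl⟩
      refine ⟨α + γ * (1 - Real.exp (U 1)),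
        β + γ * ((U 0 - U 2) * phig (U 1) - U 3 * Real.exp (U 1)) - σ * (U 4 * psig l (U 1)),
        γ * Real.exp (U 1), γ * (U 1 * Real.exp (U 1)), σ * Real.exp (l * U 1),
        aux_pos _ hγ, by ring, ?_, ?_, ?_⟩
      · rw [mul_div_cancel_left₀ _ hγ, Real.log_exp]; ring
      · rw [mul_div_cancel_left₀ _ hγ, ← Real.exp_mul, mul_comm l (U 1)]
      · funext j; fin_cases j <;> simp <;> ring
    · rintro ⟨x, y, z, t, s, hz, hx, ht, hs, rfl⟩
      have hzγ : 0 < z / γ := aux_div_pos hz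
      have hφ := ne_of_gt (phig_pos (Real.log (z / γ)))
      refine ⟨![(y - β) / (γ * phig (Real.log (z / γ))), Real.log (z / γ), 0, 0, 0], ?_⟩
      funext j; fin_cases j <;> simp [Real.exp_log hzγ]
      · rw [hx]; field_simp; ring
      · field_simp; ring
      · field_simp
      · rw [ht]; field_simp
      · rw [hs, Real.rpow_def_of_pos hzγ, mul_comm l]
  · intro hγ hδ hσ; subst hσ
    rw [orbit_eq]
    ext p
    simp only [Set.mem_range, Set.mem_setOf_eq]
    constructor
    · rintro ⟨U, rfl⟩
      refine ⟨α + γ * (1 - Real.exp (U 1)),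
        β + γ * ((U 0 - U 2) * phig (U 1) - U 3 * Real.exp (U 1)) - δ * (U 3 * phig (U 1)),
        γ * Real.exp (U 1), γ * (U 1 * Real.exp (U 1)) + δ * Real.exp (U 1),
        aux_pos _ hγ, by ring, ?_, ?_⟩
      · rw [mul_div_cancel_left₀ _ hγ, Real.log_exp]; field_simp
      · funext j; fin_cases j <;> simp <;> ring
    · rintro ⟨x, y, z, t, hz, hx, ht, rfl⟩
      have hzγ : 0 < z / γ := aux_div_pos hz
      have hφ := ne_of_gt (phig_pos (Real.log (z / γ)))
      refine ⟨![(y - β) / (γ * phig (Real.log (z / γ))), Real.log (z / γ), 0, 0, 0], ?_⟩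
      funext j; fin_cases j <;> simp [Real.exp_log hzγ]
      · rw [hx]; field_simp; ring
      · field_simp; ring
      · field_simp
      · rw [ht]; field_simp
  · intro hγ hδ hσ
    rw [orbit_eq]
    ext p
    simp only [Set.mem_range, Set.mem_setOf_eq]
    constructor
    · rintro ⟨U, rfl⟩
      refine ⟨α + γ * (1 - Real.exp (U 1)),
        β + γ * ((U 0 - U 2) * phig (U 1) - U 3 * Real.exp (U 1)) - δ * (U 3 * phig (U 1))
          - σ * (U 4 * psig l (U 1)),
        γ * Real.exp (U 1), γ * (U 1 * Real.exp (U 1)) + δ * Real.exp (U 1),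
        σ * Real.exp (l * U 1),
        aux_pos _ hγ, by ring, ?_, ?_, ?_⟩
      · rw [mul_div_cancel_left₀ _ hγ, Real.log_exp]; field_simp
      · rw [mul_div_cancel_left₀ _ hγ, ← Real.exp_mul, mul_comm l (U 1)]
      · funext j; fin_cases j <;> simp <;> ring
    · rintro ⟨x, y, z, t, s, hz, hx, ht, hs, rfl⟩
      have hzγ : 0 < z / γ := aux_div_pos hz
      have hφ := ne_of_gt (phig_pos (Real.log (z / γ)))
      refine ⟨![(y - β) / (γ * phig (Real.log (z / γ))), Real.log (z / γ), 0, 0, 0], ?_⟩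
      funext j; fin_cases j <;> simp [Real.exp_log hzγ]
      · rw [hx]; field_simp; ring
      · field_simp; ring
      · field_simp
      · rw [ht]; field_simp
      · rw [hs, Real.rpow_def_of_pos hzγ, mul_comm l]
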